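/- Let f ∈ (0,1) and let p, q ≥ 2 be integers. Then the point (s_1, s_2) = (1/(f−1), 1/f) belongs to D_f^{p,q}, and for every r ∈ [0,1), π_{f, 1/(f−1), 1/f}^{p,q}(r) = GMI_f(r) = min( r/f, (1−r)/(1−f) ). -/

import Mathlib

/-- The one-dimensional Gomory–Johnson style cut generating function
`π_{f,s₁,s₂}^{p,q}(r)`, the maximum of `min(φ_i^1(r), φ_i^2(r))` for `i = 1,…,p`
and `min(ψ_j^1(r), ψ_j^2(r))` for `j = 1,…,q-1`. -/
noncomputable def piPQ (f s₁ s₂ : ℝ) (p q : ℕ) (r : ℝ) : ℝ :=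
  sSup (((fun i : ℕ => min (s₁ * r + (i : ℝ) * (1 - f * s₁) / (p : ℝ))
            (s₂ * r + ((i : ℝ) - 1) * (1 - f * s₂) / ((p : ℝ) - 1))) '' Set.Icc 1 p) ∪
        ((fun j : ℕ => min (s₁ * (r - 1) + ((j : ℝ) - 1) * (1 + (1 - f) * s₁) / ((q : ℝ) - 1))
            (s₂ * (r - 1) + (j : ℝ) * (1 + (1 - f) * s₂) / (q : ℝ))) '' Set.Icc 1 (q - 1)))

/-- The parameter domain `D_f^{p,q}` of valid slope pairs `(s₁, s₂)`. -/
noncomputable def Dset (f : ℝ) (p q : ℕ) : Set (ℝ × ℝ) :=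
  (if ((p : ℝ) + q - 1) * f - p < 0 then
      Set.Icc (((p : ℝ) + q - 1) / (((p : ℝ) + q - 1) * f - p)) (1 / (f - 1))
    else Set.Iic (1 / (f - 1))) ×ˢ
  (if ((p : ℝ) + q - 1) * (1 - f) - q < 0 then
      Set.Icc (1 / f) (((p : ℝ) + q - 1) / ((q : ℝ) - ((p : ℝ) + q - 1) * (1 - f)))
    else Set.Ici (1 / f))

/-- The Gomory mixed-integer function. -/
noncomputable def GMI (f r : ℝ) : ℝ :=
  if Int.fract r ≤ f then Int.fract r / f else (1 - Int.fract r) / (1 - f)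

/-- `(1/(f-1), 1/f) ∈ D_f^{p,q}`, and for every `r ∈ [0,1)`,
`π_{f, 1/(f-1), 1/f}^{p,q}(r) = GMI_f(r) = min(r/f, (1-r)/(1-f))`. -/
theorem stmt4 (f : ℝ) (hf : f ∈ Set.Ioo (0 : ℝ) 1) (p q : ℕ) (hp : 2 ≤ p) (hq : 2 ≤ q) :
    (1 / (f - 1), 1 / f) ∈ Dset f p q ∧
    ∀ r ∈ Set.Ico (0 : ℝ) 1,
      piPQ f (1 / (f - 1)) (1 / f) p q r = GMI f r ∧
      GMI f r = min (r / f) ((1 - r) / (1 - f)) := by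
  obtain ⟨hf0, hf1⟩ := hf
  have hf0' : f ≠ 0 := ne_of_gt hf0
  have hfm : f - 1 < 0 := by linarith
  have hfm' : f - 1 ≠ 0 := ne_of_lt hfm
  have h1f : (0:ℝ) < 1 - f := by linarith
  have h1f' : (1:ℝ) - f ≠ 0 := ne_of_gt h1f
  have hp2 : (2:ℝ) ≤ (p:ℝ) := by exact_mod_cast hp
  have hq2 : (2:ℝ) ≤ (q:ℝ) := by exact_mod_cast hq
  have hp0 : (0:ℝ) < (p:ℝ) := by linarith
  have hq0 : (0:ℝ) < (q:ℝ) := by linarith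
  have hpm : (p:ℝ) - 1 ≠ 0 := by intro h; linarith [hp2]
  have hqm : (q:ℝ) - 1 ≠ 0 := by intro h; linarith [hq2]
  constructor
  · rw [Dset, Set.mem_prod]
    constructor
    · split_ifs with h
      · refine Set.mem_Icc.mpr ⟨?_, le_refl _⟩
        rw [show ((p:ℝ)+q-1)/(((p:ℝ)+q-1)*f-p) = (-((p:ℝ)+q-1))/(-((((p:ℝ)+q-1)*f-p))) from
            (neg_div_neg_eq _ _).symm,
          show (1:ℝ)/(f-1) = (-1)/(1-f) from by rw [div_eq_div_iff hfm' h1f']; ring]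
        rw [div_le_div_iff₀ (by linarith) h1f]
        nlinarith
      · exact Set.mem_Iic.mpr (le_refl _)
    · split_ifs with h
      · refine Set.mem_Icc.mpr ⟨le_refl _, ?_⟩
        rw [div_le_div_iff₀ hf0 (by linarith)]
        nlinarith
      · exact Set.mem_Ici.mpr (le_refl _)
  · intro r hr
    obtain ⟨hr0, hr1⟩ := hr
    have hfr : Int.fract r = r := Int.fract_eq_self.mpr ⟨hr0, hr1⟩
    have hgmi : GMI f r = min (r / f) ((1 - r) / (1 - f)) := by
      rw [GMI, hfr]
      rcases le_or_gt r f with h | h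
      · rw [if_pos h, min_eq_left]
        rw [div_le_div_iff₀ hf0 h1f]; nlinarith
      · rw [if_neg (not_le.mpr h), min_eq_right]
        rw [div_le_div_iff₀ h1f hf0]; nlinarith
    refine ⟨?_, hgmi⟩
    rw [hgmi, piPQ]
    have hub : ∀ x ∈ (((fun i : ℕ => min (1/(f-1) * r + (i : ℝ) * (1 - f * (1/(f-1))) / (p : ℝ))
            (1/f * r + ((i : ℝ) - 1) * (1 - f * (1/f)) / ((p : ℝ) - 1))) '' Set.Icc 1 p) ∪
        ((fun j : ℕ => min (1/(f-1) * (r - 1) + ((j : ℝ) - 1) * (1 + (1 - f) * (1/(f-1))) / ((q : ℝ) - 1))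
            (1/f * (r - 1) + (j : ℝ) * (1 + (1 - f) * (1/f)) / (q : ℝ))) '' Set.Icc 1 (q - 1))),
        x ≤ min (r / f) ((1 - r) / (1 - f)) := by
      rintro x (⟨i, hi, rfl⟩ | ⟨j, hj, rfl⟩)
      · obtain ⟨hi1, hip⟩ := Set.mem_Icc.mp hi
        have hipr : (i:ℝ) ≤ p := by exact_mod_cast hip
        dsimp only
        refine le_min ?_ ?_
        · refine (min_le_right _ _).trans (le_of_eq ?_)
          field_simp
          ring
        · refine (min_le_left _ _).trans ?_
          rw [show 1/(f-1) * r + (i : ℝ) * (1 - f * (1/(f-1))) / (p : ℝ)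
              = ((i:ℝ)/p - r)/(1-f) from by field_simp; ring]
          rw [div_le_div_iff₀ h1f h1f]
          have : (i:ℝ)/p ≤ 1 := (div_le_one hp0).mpr hipr
          nlinarith
      · obtain ⟨hj1, hjq⟩ := Set.mem_Icc.mp hj
        have hjqr : (j:ℝ) ≤ q := by
          have : j ≤ q := le_trans hjq (Nat.sub_le q 1)
          exact_mod_cast this
        dsimp only
        refine le_min ?_ ?_
        · refine (min_le_right _ _).trans ?_
          rw [show 1/f * (r - 1) + (j : ℝ) * (1 + (1 - f) * (1/f)) / (q : ℝ)
              = (r - 1 + (j:ℝ)/q)/f from by field_simp; ring]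
          rw [div_le_div_iff₀ hf0 hf0]
          have : (j:ℝ)/q ≤ 1 := (div_le_one hq0).mpr hjqr
          nlinarith
        · refine (min_le_left _ _).trans (le_of_eq ?_)
          field_simp
          ring
    apply le_antisymm
    · exact csSup_le ⟨_, Set.mem_union_left _ ⟨p, Set.mem_Icc.mpr ⟨by omega, le_refl p⟩, rfl⟩⟩ hub
    · have hmem : min ((1-r)/(1-f)) (r/f) ∈
          (((fun i : ℕ => min (1/(f-1) * r + (i : ℝ) * (1 - f * (1/(f-1))) / (p : ℝ))
            (1/f * r + ((i : ℝ) - 1) * (1 - f * (1/f)) / ((p : ℝ) - 1))) '' Set.Icc 1 p) ∪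
        ((fun j : ℕ => min (1/(f-1) * (r - 1) + ((j : ℝ) - 1) * (1 + (1 - f) * (1/(f-1))) / ((q : ℝ) - 1))
            (1/f * (r - 1) + (j : ℝ) * (1 + (1 - f) * (1/f)) / (q : ℝ))) '' Set.Icc 1 (q - 1))) := by
        refine Set.mem_union_left _ ⟨p, Set.mem_Icc.mpr ⟨by omega, le_refl p⟩, ?_⟩
        dsimp only
        rw [show 1/(f-1) * r + (p:ℝ) * (1 - f * (1/(f-1))) / (p:ℝ) = (1-r)/(1-f) from by
              field_simp; ring,
            show 1/f * r + ((p:ℝ)-1) * (1 - f * (1/f)) / ((p:ℝ)-1) = r/f from by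
              field_simp; ring]
      rw [min_comm]
      exact le_csSup ⟨_, hub⟩ hmem
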